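/- Let τ ≥ 1 be a real number and let K be a set of integers with 2 ≤ K_min and K_max ≤ √2·(K_min−1). Suppose there exists a (v,K)-packing with n blocks whose block sizes sum to N, with 2n−1 ≤ N, in which every point has replication number r_x ≥ (v−1)/(τ(K_min−1)). Then there exists an n×N complex matrix with (ℓ₁,t)-recoverability for every positive integer t ≤ √n/(4τ). -/

import Mathlib

open scoped BigOperators

noncomputable def welch (n N : ℕ) : ℝ :=
  Real.sqrt (((N : ℝ) - n) / (((N : ℝ) - 1) * n))

/-- Normalised absolute inner product of columns `i` and `j` of `Φ`. -/
noncomputable def colCoh {m ι : Type*} [Fintype m] (Φ : Matrix m ι ℂ) (i j : ι) : ℝ :=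
  ‖∑ r, (starRingEnd ℂ) (Φ r i) * Φ r j‖ /
    (Real.sqrt (∑ r, ‖Φ r i‖ ^ 2) * Real.sqrt (∑ r, ‖Φ r j‖ ^ 2))

/-- `(ℓ₁,t)`-recoverability: every `t`-sparse `x` is the unique `ℓ₁`-minimizer among
solutions `z` of `Φ z = Φ x`. -/
def Recoverable {m ι : Type*} [Fintype m] [Fintype ι] [DecidableEq ι]
    (Φ : Matrix m ι ℂ) (t : ℕ) : Prop :=
  ∀ x : ι → ℂ, (Finset.univ.filter (fun i => x i ≠ 0)).card ≤ t →
    ∀ z : ι → ℂ, Φ.mulVec z = Φ.mulVec x → z ≠ x →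
      ∑ i, ‖x i‖ < ∑ i, ‖z i‖
/-- `B` is the block set of a `(v,K)`-packing: every block has cardinality in `K`
and every pair of distinct points lies in at most one block. -/
def IsPacking {V : Type*} [DecidableEq V] (B : Finset (Finset V)) (K : Finset ℕ) : Prop :=
  (∀ b ∈ B, b.card ∈ K) ∧
  ∀ x y : V, x ≠ y → (B.filter (fun b => x ∈ b ∧ y ∈ b)).card ≤ 1

/-- The replication number of the point `x`: the number of blocks containing `x`. -/
def repl {V : Type*} [DecidableEq V] (B : Finset (Finset V)) (x : V) : ℕ :=
  (B.filter (fun b => x ∈ b)).card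

lemma recoverable_of_coherence {m ι : Type*} [Fintype m] [Fintype ι] [DecidableEq ι]
    (Φ : Matrix m ι ℂ) (μ : ℝ) (hμ0 : 0 ≤ μ) (t : ℕ)
    (hnorm : ∀ j, ∑ r, (starRingEnd ℂ) (Φ r j) * Φ r j = 1)
    (hcoh : ∀ i j : ι, i ≠ j → ‖∑ r, (starRingEnd ℂ) (Φ r i) * Φ r j‖ ≤ μ)
    (ht : (2 * (t:ℝ) - 1) * μ < 1) :
    Recoverable Φ t := by
  intro x hx z hz hne
  set h : ι → ℂ := fun i => z i - x i with hh
  have hΦh : Φ.mulVec h = 0 := by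
    have h1 : h = z - x := rfl
    rw [h1, Matrix.mulVec_sub, hz, sub_self]
  set T : ℝ := ∑ j, ‖h j‖ with hT
  have hT0 : 0 < T := by
    have hne' : ∃ i, h i ≠ 0 := by
      by_contra hc
      push_neg at hc
      exact hne (funext fun i => by
        have := hc i
        simpa [hh, sub_eq_zero] using this)
    obtain ⟨i, hi⟩ := hne'
    have h1 : 0 < ‖h i‖ := norm_pos_iff.2 hi
    have h2 : ‖h i‖ ≤ T := Finset.single_le_sum (f := fun j => ‖h j‖)
      (fun j _ => norm_nonneg _) (Finset.mem_univ i)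
    linarith
  -- pointwise bound
  have key : ∀ i : ι, ‖h i‖ * (1 + μ) ≤ μ * T := by
    intro i
    have h0 : ∑ j, (∑ r, (starRingEnd ℂ) (Φ r i) * Φ r j) * h j = 0 := by
      have e1 : ∑ r, (starRingEnd ℂ) (Φ r i) * (Φ.mulVec h r) = 0 := by
        rw [hΦh]; simp
      rw [← e1]
      simp only [Matrix.mulVec, dotProduct, Finset.mul_sum, Finset.sum_mul]
      rw [Finset.sum_comm]
      apply Finset.sum_congr rfl
      intro r _
      apply Finset.sum_congr rfl
      intro j _
      ring
    have h1 : h i = -∑ j ∈ Finset.univ.erase i, (∑ r, (starRingEnd ℂ) (Φ r i) * Φ r j) * h j := by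
      have := Finset.add_sum_erase Finset.univ
        (fun j => (∑ r, (starRingEnd ℂ) (Φ r i) * Φ r j) * h j) (Finset.mem_univ i)
      rw [← this] at h0
      rw [hnorm i, one_mul] at h0
      linear_combination h0
    have h2 : ‖h i‖ ≤ μ * ∑ j ∈ Finset.univ.erase i, ‖h j‖ := by
      rw [h1, norm_neg]
      calc ‖∑ j ∈ Finset.univ.erase i, (∑ r, (starRingEnd ℂ) (Φ r i) * Φ r j) * h j‖
          ≤ ∑ j ∈ Finset.univ.erase i, ‖(∑ r, (starRingEnd ℂ) (Φ r i) * Φ r j) * h j‖ :=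
            norm_sum_le _ _
        _ ≤ ∑ j ∈ Finset.univ.erase i, μ * ‖h j‖ := by
            apply Finset.sum_le_sum
            intro j hj
            rw [norm_mul]
            exact mul_le_mul_of_nonneg_right
              (hcoh i j (fun e => (Finset.mem_erase.1 hj).1 e.symm)) (norm_nonneg _)
        _ = μ * ∑ j ∈ Finset.univ.erase i, ‖h j‖ := by rw [Finset.mul_sum]
    have h3 : ∑ j ∈ Finset.univ.erase i, ‖h j‖ = T - ‖h i‖ := by
      rw [hT, ← Finset.add_sum_erase Finset.univ (fun j => ‖h j‖) (Finset.mem_univ i)]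
      ring
    rw [h3] at h2
    nlinarith [norm_nonneg (h i)]
  -- sum over support
  set S : Finset ι := Finset.univ.filter (fun i => x i ≠ 0) with hS
  have hsupS : ∑ i ∈ S, ‖h i‖ < T / 2 := by
    have hb : ∀ i ∈ S, ‖h i‖ ≤ μ * T / (1 + μ) := by
      intro i _
      rw [le_div_iff₀ (by linarith : (0:ℝ) < 1 + μ)]
      linarith [key i]
    calc ∑ i ∈ S, ‖h i‖ ≤ S.card * (μ * T / (1 + μ)) := by
          have := Finset.sum_le_card_nsmul S (fun i => ‖h i‖) _ hb
          simpa [nsmul_eq_mul] using this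
      _ ≤ t * (μ * T / (1 + μ)) := by
          apply mul_le_mul_of_nonneg_right
          · exact_mod_cast hx
          · positivity
      _ < T / 2 := by
          have he : (t:ℝ) * (μ * T / (1 + μ)) = ((t:ℝ) * μ * T) / (1 + μ) := by ring
          rw [he, div_lt_div_iff₀ (by linarith) (by norm_num : (0:ℝ) < 2)]
          nlinarith
  -- conclude
  have hxsum : ∑ i, ‖x i‖ = ∑ i ∈ S, ‖x i‖ := by
    symm
    apply Finset.sum_subset (Finset.subset_univ S)
    intro i _ hi
    simp [hS] at hi
    simp [hi]
  have hzsplit : ∑ i, ‖z i‖ = ∑ i ∈ S, ‖z i‖ + ∑ i ∈ Sᶜ, ‖z i‖ := by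
    rw [← Finset.sum_add_sum_compl S]
  have hTsplit : T = ∑ i ∈ S, ‖h i‖ + ∑ i ∈ Sᶜ, ‖h i‖ :=
    (Finset.sum_add_sum_compl S _).symm
  have hzc : ∑ i ∈ Sᶜ, ‖z i‖ = ∑ i ∈ Sᶜ, ‖h i‖ := by
    apply Finset.sum_congr rfl
    intro i hi
    have : x i = 0 := by
      simp [hS, Finset.mem_compl] at hi
      exact hi
    simp [hh, this]
  have hzS : ∀ i ∈ S, ‖x i‖ - ‖h i‖ ≤ ‖z i‖ := by
    intro i _
    have : x i = z i - h i := by simp [hh]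
    calc ‖x i‖ - ‖h i‖ ≤ ‖z i‖ + ‖h i‖ - ‖h i‖ := by
          have : ‖x i‖ ≤ ‖z i‖ + ‖h i‖ := by
            rw [this]; exact norm_sub_le _ _
          linarith
      _ = ‖z i‖ := by ring
  have hzSsum : ∑ i ∈ S, ‖x i‖ - ∑ i ∈ S, ‖h i‖ ≤ ∑ i ∈ S, ‖z i‖ := by
    rw [← Finset.sum_sub_distrib]
    exact Finset.sum_le_sum hzS
  rw [hxsum, hzsplit, hzc]
  linarith

namespace Stmt16Aux

variable {V : Type} [DecidableEq V] (B : Finset (Finset V))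

def Row := {b // b ∈ B}

instance : Fintype (Row B) := by unfold Row; infer_instance
instance : DecidableEq (Row B) := by unfold Row; infer_instance

def Col := Σ b : Row B, {x : V // x ∈ b.1}

instance [Fintype V] : Fintype (Col B) := by unfold Col Row; infer_instance
instance : DecidableEq (Col B) := by unfold Col Row; exact Sigma.instDecidableEqSigma

def eSub (x : V) : {p : Row B // x ∈ p.1} ≃ {c // c ∈ B.filter (fun b => x ∈ b)} where
  toFun p := ⟨p.1.1, Finset.mem_filter.2 ⟨p.1.2, p.2⟩⟩
  invFun c := ⟨⟨c.1, (Finset.mem_filter.1 c.2).1⟩, (Finset.mem_filter.1 c.2).2⟩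
  left_inv p := rfl
  right_inv c := rfl

noncomputable def eF (x : V) : {p : Row B // x ∈ p.1} ≃ Fin (repl B x) :=
  (eSub B x).trans ((B.filter (fun b => x ∈ b)).equivFin)

/-- total version of the index function -/
noncomputable def idxN (x : V) (b' : Row B) : ℕ :=
  if h : x ∈ b'.1 then (eF B x ⟨b', h⟩ : ℕ) else 0

noncomputable def zeta (x : V) : ℂ :=
  Complex.exp (2 * Real.pi * Complex.I / (repl B x))

noncomputable def Pmat : Matrix (Row B) (Col B) ℂ :=
  fun b' j =>
    if (j.2 : V) ∈ b'.1 then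
      zeta B (j.2 : V) ^ (idxN B (j.2 : V) b' * idxN B (j.2 : V) j.1) /
        (Real.sqrt (repl B (j.2 : V)) : ℂ)
    else 0

variable {B}

lemma zeta_prim {x : V} (h : repl B x ≠ 0) : IsPrimitiveRoot (zeta B x) (repl B x) :=
  Complex.isPrimitiveRoot_exp _ h

lemma zeta_ne (x : V) : zeta B x ≠ 0 := Complex.exp_ne_zero _

lemma zeta_abs (x : V) : ‖zeta B x‖ = 1 := by
  have : zeta B x = Complex.exp (((2 * Real.pi / (repl B x : ℝ) : ℝ) : ℂ) * Complex.I) := by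
    unfold zeta
    congr 1
    push_cast
    ring
  rw [this, Complex.norm_exp_ofReal_mul_I]

lemma zeta_pow_abs (x : V) (a : ℕ) : ‖zeta B x ^ a‖ = 1 := by
  rw [norm_pow, zeta_abs, one_pow]

lemma conj_zeta_pow (x : V) (a : ℕ) :
    (starRingEnd ℂ) (zeta B x ^ a) = (zeta B x ^ a)⁻¹ := by
  rw [← Complex.inv_eq_conj (zeta_pow_abs x a)]

lemma conj_pow_mul_pow (x : V) (a b : ℕ) :
    (starRingEnd ℂ) (zeta B x ^ a) * zeta B x ^ b = zeta B x ^ ((b : ℤ) - (a : ℤ)) := by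
  rw [conj_zeta_pow]
  rw [← zpow_natCast (zeta B x) a, ← zpow_natCast (zeta B x) b, ← zpow_neg,
    ← zpow_add₀ (zeta_ne x)]
  congr 1
  ring

lemma geom_zeta_sum {x : V} (h : repl B x ≠ 0) {d : ℤ} (hd : ¬ ((repl B x : ℤ) ∣ d)) :
    ∑ k ∈ Finset.range (repl B x), (zeta B x ^ d) ^ k = 0 := by
  have hq1 : zeta B x ^ d ≠ 1 := fun hc => hd (((zeta_prim h).zpow_eq_one_iff_dvd d).1 hc)
  have hqr : (zeta B x ^ d) ^ (repl B x) = 1 := by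
    rw [← zpow_natCast (zeta B x ^ d), ← zpow_mul, mul_comm, zpow_mul,
      zpow_natCast, (zeta_prim h).pow_eq_one, one_zpow]
  rw [geom_sum_eq hq1, hqr, sub_self, zero_div]

lemma fin_sub_not_dvd {r : ℕ} {A C : Fin r} (h : A ≠ C) : ¬ ((r : ℤ) ∣ (C : ℤ) - (A : ℤ)) := by
  intro hdvd
  have h0 : ((C : ℤ) - (A : ℤ)) = 0 := by
    apply Int.eq_zero_of_abs_lt_dvd hdvd
    have hA : (A : ℤ) < r := by exact_mod_cast A.isLt
    have hC : (C : ℤ) < r := by exact_mod_cast C.isLt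
    have hA0 : (0:ℤ) ≤ A := by positivity
    have hC0 : (0:ℤ) ≤ C := by positivity
    rw [abs_sub_lt_iff]
    constructor <;> omega
  apply h
  have : (A : ℤ) = (C : ℤ) := by omega
  have : (A : ℕ) = (C : ℕ) := by exact_mod_cast this
  exact Fin.ext this

end Stmt16Aux

namespace Stmt16Aux

variable {V : Type} [DecidableEq V] {B : Finset (Finset V)}

lemma sum_row_ite (x : V) (g : ℕ → ℂ) :
    ∑ b' : Row B, (if x ∈ b'.1 then g (idxN B x b') else 0)
      = ∑ k ∈ Finset.range (repl B x), g k := by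
  classical
  rw [← Fintype.sum_subtype_add_sum_subtype (fun b' : Row B => x ∈ b'.1)
    (fun b' => if x ∈ b'.1 then g (idxN B x b') else 0)]
  have h2 : ∑ p : {b' : Row B // ¬ x ∈ b'.1},
      (if x ∈ p.1.1 then g (idxN B x p.1) else 0) = 0 := by
    apply Finset.sum_eq_zero
    intro p _
    rw [if_neg p.2]
  rw [h2, add_zero]
  have h1 : ∀ p : {b' : Row B // x ∈ b'.1},
      (if x ∈ p.1.1 then g (idxN B x p.1) else 0) = g (eF B x p) := by
    intro p
    rw [if_pos p.2]
    congr 1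
    unfold idxN
    rw [dif_pos p.2]
  rw [Finset.sum_congr rfl (fun p _ => h1 p)]
  rw [← Equiv.sum_comp (eF B x).symm (fun p => g ((eF B x) p))]
  simp only [Equiv.apply_symm_apply]
  exact Fin.sum_univ_eq_sum_range (fun k => g k) (repl B x)

lemma norm_col (j : Col B) (h : repl B (j.2 : V) ≠ 0) :
    ∑ b' : Row B, (starRingEnd ℂ) (Pmat B b' j) * Pmat B b' j = 1 := by
  have e1 : ∀ b' : Row B, (starRingEnd ℂ) (Pmat B b' j) * Pmat B b' j
      = if (j.2 : V) ∈ b'.1 then (repl B (j.2 : V) : ℂ)⁻¹ else 0 := by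
    intro b'
    by_cases hm : (j.2 : V) ∈ b'.1
    · rw [if_pos hm]
      unfold Pmat
      rw [if_pos hm]
      set m := idxN B (j.2 : V) b' * idxN B (j.2 : V) j.1
      rw [map_div₀, Complex.conj_ofReal]
      rw [div_mul_div_comm, conj_pow_mul_pow, sub_self, zpow_zero]
      rw [← Complex.ofReal_mul, Real.mul_self_sqrt (Nat.cast_nonneg _)]
      rw [one_div]
      norm_num
    · rw [if_neg hm]
      unfold Pmat
      rw [if_neg hm]
      simp
  rw [Finset.sum_congr rfl (fun b' _ => e1 b')]
  rw [sum_row_ite (B := B) (j.2 : V) (fun _ => (repl B (j.2 : V) : ℂ)⁻¹)]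
  rw [Finset.sum_const, Finset.card_range, nsmul_eq_mul]
  rw [mul_inv_cancel₀]
  exact_mod_cast h

end Stmt16Aux

namespace Stmt16Aux

variable {V : Type} [DecidableEq V] {B : Finset (Finset V)}

lemma ip_same_pt (b c : Row B) (xb : {x : V // x ∈ b.1}) (yc : {y : V // y ∈ c.1})
    (hxy : (xb : V) = (yc : V)) (hbc : b ≠ c) (h : repl B (xb : V) ≠ 0) :
    ∑ b' : Row B,
      (starRingEnd ℂ) (Pmat B b' ⟨b, xb⟩) * Pmat B b' ⟨c, yc⟩ = 0 := by
  classical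
  set w : V := (xb : V) with hw
  have hwc : w ∈ c.1 := hxy ▸ yc.2
  set pb : {p : Row B // w ∈ p.1} := ⟨b, xb.2⟩ with hpb
  set pc : {p : Row B // w ∈ p.1} := ⟨c, hwc⟩ with hpc
  set AF : Fin (repl B w) := eF B w pb with hAF
  set CF : Fin (repl B w) := eF B w pc with hCF
  have hAC : AF ≠ CF := by
    intro heq
    apply hbc
    have := (eF B w).injective heq
    have := congrArg Subtype.val this
    simpa [hpb, hpc] using this
  set d : ℤ := ((CF : ℕ) : ℤ) - ((AF : ℕ) : ℤ) with hd
  have hdvd : ¬ ((repl B w : ℤ) ∣ d) := fin_sub_not_dvd hAC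
  have e1 : ∀ b' : Row B,
      (starRingEnd ℂ) (Pmat B b' ⟨b, xb⟩) * Pmat B b' ⟨c, yc⟩
        = if w ∈ b'.1 then
            ((zeta B w ^ d) ^ (idxN B w b')) / ((repl B w : ℝ) : ℂ) else 0 := by
    intro b'
    by_cases hm : w ∈ b'.1
    · rw [if_pos hm]
      show (starRingEnd ℂ) (Pmat B b' ⟨b, xb⟩) * Pmat B b' ⟨c, yc⟩ = _
      unfold Pmat
      simp only [← hxy]
      rw [if_pos hm, if_pos hm]
      have hia : idxN B w b = (AF : ℕ) := by
        unfold idxN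
        rw [dif_pos xb.2]
      have hic : idxN B w c = (CF : ℕ) := by
        unfold idxN
        rw [dif_pos hwc]
      rw [map_div₀, Complex.conj_ofReal, div_mul_div_comm, conj_pow_mul_pow,
        ← Complex.ofReal_mul, Real.mul_self_sqrt (Nat.cast_nonneg _)]
      have hcast : ((repl B w : ℝ) : ℂ) = ((repl B w : ℕ) : ℂ) := by push_cast; rfl
      congr 1
      rw [hia, hic]
      have hexp : ((idxN B w b' * (CF : ℕ) : ℕ) : ℤ) - ((idxN B w b' * (AF : ℕ) : ℕ) : ℤ)
          = d * (idxN B w b' : ℤ) := by push_cast [hd]; ring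
      rw [hexp, zpow_mul, zpow_natCast]
    · rw [if_neg hm]
      show (starRingEnd ℂ) (Pmat B b' ⟨b, xb⟩) * Pmat B b' ⟨c, yc⟩ = 0
      unfold Pmat
      simp only [← hxy]
      rw [if_neg hm]
      simp
  rw [Finset.sum_congr rfl (fun b' _ => e1 b')]
  rw [sum_row_ite (B := B) w (fun k => ((zeta B w ^ d) ^ k) / ((repl B w : ℝ) : ℂ))]
  rw [← Finset.sum_div]
  rw [geom_zeta_sum h hdvd, zero_div]

end Stmt16Aux

namespace Stmt16Aux

variable {V : Type} [DecidableEq V] {B : Finset (Finset V)}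

lemma entry_norm_le (b' : Row B) (j : Col B) :
    ‖Pmat B b' j‖ ≤ 1 / Real.sqrt (repl B (j.2 : V)) := by
  unfold Pmat
  by_cases hm : (j.2 : V) ∈ b'.1
  · rw [if_pos hm, norm_div]
    have h1 : ‖zeta B (j.2 : V) ^ (idxN B (j.2 : V) b' * idxN B (j.2 : V) j.1)‖ = 1 := by
      rw [zeta_pow_abs]
    rw [h1, Complex.norm_real, Real.norm_eq_abs,
      abs_of_nonneg (Real.sqrt_nonneg _)]
  · rw [if_neg hm, norm_zero]
    positivity

lemma pmat_eq_zero (b' : Row B) (j : Col B) (hm : (j.2 : V) ∉ b'.1) :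
    Pmat B b' j = 0 := by
  unfold Pmat
  rw [if_neg hm]

lemma ip_diff_pt (j j' : Col B) (hxy : (j.2 : V) ≠ (j'.2 : V))
    (hpack2 : (B.filter (fun b => (j.2 : V) ∈ b ∧ (j'.2 : V) ∈ b)).card ≤ 1) :
    ‖∑ b' : Row B, (starRingEnd ℂ) (Pmat B b' j) * Pmat B b' j'‖
      ≤ 1 / (Real.sqrt (repl B (j.2 : V)) * Real.sqrt (repl B (j'.2 : V))) := by
  classical
  set F : Finset (Row B) :=
    Finset.univ.filter (fun b' : Row B => (j.2 : V) ∈ b'.1 ∧ (j'.2 : V) ∈ b'.1) with hF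
  have hzero : ∀ b' ∈ Finset.univ \ F,
      (starRingEnd ℂ) (Pmat B b' j) * Pmat B b' j' = 0 := by
    intro b' hb'
    rw [Finset.mem_sdiff, hF, Finset.mem_filter] at hb'
    have h2 := hb'.2
    push_neg at h2
    by_cases h1 : (j.2 : V) ∈ b'.1
    · rw [pmat_eq_zero b' j' (h2 (Finset.mem_univ _) h1), mul_zero]
    · rw [pmat_eq_zero b' j h1, map_zero, zero_mul]
  have hsum : ∑ b' : Row B, (starRingEnd ℂ) (Pmat B b' j) * Pmat B b' j'
      = ∑ b' ∈ F, (starRingEnd ℂ) (Pmat B b' j) * Pmat B b' j' := by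
    symm
    apply Finset.sum_subset (Finset.subset_univ _)
    intro b' h1 h2
    exact hzero b' (Finset.mem_sdiff.2 ⟨h1, h2⟩)
  have hcard : F.card ≤ 1 := by
    refine le_trans (Finset.card_le_card_of_injOn (fun b' => b'.1)
      ?_ ?_) hpack2
    · intro b' hb'
      rw [Finset.mem_coe, hF, Finset.mem_filter] at hb'
      exact Finset.mem_filter.2 ⟨b'.2, hb'.2⟩
    · intro a _ b _ hab
      exact Subtype.ext hab
  rw [hsum]
  calc ‖∑ b' ∈ F, (starRingEnd ℂ) (Pmat B b' j) * Pmat B b' j'‖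
      ≤ ∑ b' ∈ F, ‖(starRingEnd ℂ) (Pmat B b' j) * Pmat B b' j'‖ := norm_sum_le _ _
    _ ≤ ∑ b' ∈ F, 1 / (Real.sqrt (repl B (j.2 : V)) * Real.sqrt (repl B (j'.2 : V))) := by
        apply Finset.sum_le_sum
        intro b' _
        rw [norm_mul, RCLike.norm_conj]
        calc ‖Pmat B b' j‖ * ‖Pmat B b' j'‖
            ≤ (1 / Real.sqrt (repl B (j.2 : V))) * (1 / Real.sqrt (repl B (j'.2 : V))) := by
              apply mul_le_mul (entry_norm_le b' j) (entry_norm_le b' j')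
                (norm_nonneg _) (by positivity)
          _ = 1 / (Real.sqrt (repl B (j.2 : V)) * Real.sqrt (repl B (j'.2 : V))) := by
              rw [div_mul_div_comm, one_mul]
    _ = F.card * (1 / (Real.sqrt (repl B (j.2 : V)) * Real.sqrt (repl B (j'.2 : V)))) := by
        rw [Finset.sum_const, nsmul_eq_mul]
    _ ≤ 1 / (Real.sqrt (repl B (j.2 : V)) * Real.sqrt (repl B (j'.2 : V))) := by
        have h1 : (F.card : ℝ) ≤ 1 := by exact_mod_cast hcard
        nlinarith [one_div_nonneg.2 (mul_nonneg (Real.sqrt_nonneg (repl B (j.2:V) : ℝ)) (Real.sqrt_nonneg (repl B (j'.2:V) : ℝ)))]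

end Stmt16Aux

namespace Stmt16Aux

variable {V : Type} [DecidableEq V] {B : Finset (Finset V)}

lemma card_row : Fintype.card (Row B) = B.card := by
  unfold Row
  exact Fintype.card_coe B

lemma card_col [Fintype V] : Fintype.card (Col B) = ∑ b ∈ B, b.card := by
  unfold Col Row
  rw [Fintype.card_sigma]
  calc ∑ b : {b // b ∈ B}, Fintype.card {x : V // x ∈ b.1}
      = ∑ b : {b // b ∈ B}, (b : Finset V).card := by
        apply Finset.sum_congr rfl
        intro b _
        exact Fintype.card_coe _
    _ = ∑ b ∈ B, b.card := Finset.sum_coe_sort B (fun b => b.card)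

lemma packing_pairs [Fintype V] {K : Finset ℕ} (hp : IsPacking B K) :
    ∑ b ∈ B, (b.card * b.card - b.card)
      ≤ Fintype.card V * Fintype.card V - Fintype.card V := by
  classical
  have hdisj : ∀ b ∈ B, ∀ c ∈ B, b ≠ c → Disjoint (Finset.offDiag b) (Finset.offDiag c) := by
    intro b hb c hc hbc
    rw [Finset.disjoint_left]
    intro p hpb hpc
    rw [Finset.mem_offDiag] at hpb hpc
    have h2 : 1 < (B.filter (fun bl => p.1 ∈ bl ∧ p.2 ∈ bl)).card := by
      rw [Finset.one_lt_card]
      exact ⟨b, Finset.mem_filter.2 ⟨hb, hpb.1, hpb.2.1⟩,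
        c, Finset.mem_filter.2 ⟨hc, hpc.1, hpc.2.1⟩, hbc⟩
    exact absurd (hp.2 p.1 p.2 hpb.2.2) (by omega)
  calc ∑ b ∈ B, (b.card * b.card - b.card)
      = ∑ b ∈ B, (Finset.offDiag b).card := by
        apply Finset.sum_congr rfl
        intro b _
        rw [Finset.offDiag_card]
    _ = (B.biUnion (fun b => Finset.offDiag b)).card := (Finset.card_biUnion hdisj).symm
    _ ≤ (Finset.univ : Finset V).offDiag.card := by
        apply Finset.card_le_card
        intro p hp'
        rw [Finset.mem_biUnion] at hp'
        obtain ⟨b, _, hpb⟩ := hp'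
        rw [Finset.mem_offDiag] at hpb ⊢
        exact ⟨Finset.mem_univ _, Finset.mem_univ _, hpb.2.2⟩
    _ = Fintype.card V * Fintype.card V - Fintype.card V := by
        rw [Finset.offDiag_card, Finset.card_univ]

end Stmt16Aux

set_option maxHeartbeats 1600000 in
open Stmt16Aux in
/-- If `τ ≥ 1`, `2 ≤ K_min`, `K_max ≤ √2 (K_min − 1)`, and there is a `(v,K)`-packing
with `n` blocks, block sizes summing to `N`, `2n − 1 ≤ N`, and every replication
number at least `(v−1)/(τ(K_min−1))`, then there exists an `n × N` complex matrix
with `(ℓ₁,t)`-recoverability for all positive `t ≤ √n/(4τ)`. -/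
theorem stmt_16 (τ : ℝ) (hτ : 1 ≤ τ)
    (K : Finset ℕ) (hKne : K.Nonempty) (hKmin : 2 ≤ K.min' hKne)
    (hKmax : (K.max' hKne : ℝ) ≤ Real.sqrt 2 * ((K.min' hKne : ℝ) - 1))
    (v n N : ℕ) (hnN : 2 * n - 1 ≤ N)
    (hex : ∃ (V : Type) (_ : Fintype V) (_ : DecidableEq V) (B : Finset (Finset V)),
      Fintype.card V = v ∧ IsPacking B K ∧ B.card = n ∧ (∑ b ∈ B, b.card = N) ∧
      ∀ x : V, ((v : ℝ) - 1) / (τ * ((K.min' hKne : ℝ) - 1)) ≤ (repl B x : ℝ)) :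
    ∃ Φ : Matrix (Fin n) (Fin N) ℂ,
      ∀ t : ℕ, 0 < t → (t : ℝ) ≤ Real.sqrt n / (4 * τ) → Recoverable Φ t := by
  classical
  have hτ0 : (0:ℝ) < τ := lt_of_lt_of_le one_pos hτ
  by_cases hn0 : n = 0
  · refine ⟨0, fun t ht hle => absurd hle ?_⟩
    subst hn0
    push_neg
    rw [Nat.cast_zero, Real.sqrt_zero, zero_div]
    exact_mod_cast ht
  obtain ⟨V, hFV, hDV, B, hcardV, hpack, hBn, hBsum, hrepl⟩ := hex
  letI := hFV; letI := hDV
  set Km : ℕ := K.min' hKne with hKm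
  -- basic facts
  have hBne : B.Nonempty := Finset.nonempty_of_ne_empty (by
    intro he
    exact hn0 (by rw [← hBn, he, Finset.card_empty]))
  obtain ⟨b0, hb0⟩ := hBne
  have hKmb0 : Km ≤ b0.card := K.min'_le _ (hpack.1 b0 hb0)
  have hv2 : 2 ≤ v := by
    have h1 : b0.card ≤ v := by
      rw [← hcardV, ← Finset.card_univ]
      exact Finset.card_le_card (Finset.subset_univ b0)
    omega
  have hKmR : (2:ℝ) ≤ (Km:ℝ) := by exact_mod_cast hKmin
  have hvR : (2:ℝ) ≤ (v:ℝ) := by exact_mod_cast hv2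
  set A : ℝ := ((v:ℝ) - 1) / (τ * ((Km:ℝ) - 1)) with hA
  have hA0 : 0 < A := by
    apply div_pos (by linarith) (by nlinarith)
  set μ : ℝ := (τ * ((Km:ℝ) - 1)) / ((v:ℝ) - 1) with hμ
  have hμ0 : 0 < μ := div_pos (by nlinarith) (by linarith)
  have hμA : μ = 1 / A := by rw [hA, one_div_div]
  have hreplA : ∀ x : V, A ≤ (repl B x : ℝ) := hrepl
  have hrepl0 : ∀ x : V, repl B x ≠ 0 := by
    intro x hx
    have := hreplA x
    rw [hx] at this
    push_cast at this
    linarith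
  have hsqrt_bound : ∀ x y : V,
      1 / (Real.sqrt (repl B x) * Real.sqrt (repl B y)) ≤ μ := by
    intro x y
    rw [hμA]
    apply one_div_le_one_div_of_le hA0
    calc A = Real.sqrt A * Real.sqrt A := (Real.mul_self_sqrt hA0.le).symm
      _ ≤ Real.sqrt (repl B x) * Real.sqrt (repl B y) :=
          mul_le_mul (Real.sqrt_le_sqrt (hreplA x)) (Real.sqrt_le_sqrt (hreplA y))
            (Real.sqrt_nonneg _) (Real.sqrt_nonneg _)
  -- the matrix
  have hcr : Fintype.card (Row B) = n := by rw [card_row, hBn]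
  have hcc : Fintype.card (Col B) = N := by rw [card_col, hBsum]
  set em : Fin n ≃ Row B := (Fintype.equivFinOfCardEq hcr).symm with hem
  set ec : Fin N ≃ Col B := (Fintype.equivFinOfCardEq hcc).symm with hec
  set Φ : Matrix (Fin n) (Fin N) ℂ := fun i j => Pmat B (em i) (ec j) with hΦ
  have hnormΦ : ∀ j, ∑ r, (starRingEnd ℂ) (Φ r j) * Φ r j = 1 := by
    intro j
    rw [hΦ]
    rw [Equiv.sum_comp em (fun b' => (starRingEnd ℂ) (Pmat B b' (ec j)) * Pmat B b' (ec j))]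
    exact norm_col (ec j) (hrepl0 _)
  have hcohΦ : ∀ i j : Fin N, i ≠ j →
      ‖∑ r, (starRingEnd ℂ) (Φ r i) * Φ r j‖ ≤ μ := by
    intro i j hij
    rw [hΦ]
    rw [Equiv.sum_comp em (fun b' => (starRingEnd ℂ) (Pmat B b' (ec i)) * Pmat B b' (ec j))]
    have hne : ec i ≠ ec j := fun h => hij (ec.injective h)
    set j1 : Col B := ec i with hj1
    set j2 : Col B := ec j with hj2
    by_cases hpt : (j1.2 : V) = (j2.2 : V)
    · have hbc : j1.1 ≠ j2.1 := by
        intro hb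
        apply hne
        rcases j1 with ⟨b, xb⟩
        rcases j2 with ⟨c, yc⟩
        simp only at hb
        subst hb
        simp only at hpt
        rw [Subtype.ext hpt]
      have h0 : ∑ b' : Row B, (starRingEnd ℂ) (Pmat B b' j1) * Pmat B b' j2 = 0 :=
        ip_same_pt j1.1 j2.1 j1.2 j2.2 hpt hbc (hrepl0 _)
      rw [h0, norm_zero]
      exact hμ0.le
    · exact le_trans (ip_diff_pt j1 j2 hpt (hpack.2 _ _ hpt)) (hsqrt_bound _ _)
  -- counting inequality
  have hcount : n * (Km * Km - Km) ≤ v * v - v := by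
    have hpp := packing_pairs hpack
    rw [hcardV] at hpp
    refine le_trans ?_ hpp
    rw [← hBn]
    have hterm : ∀ b ∈ B, Km * Km - Km ≤ b.card * b.card - b.card := by
      intro b hb
      have hKb : Km ≤ b.card := K.min'_le _ (hpack.1 b hb)
      have e : ∀ a : ℕ, a * a - a = a * (a - 1) := by
        intro a
        rw [Nat.mul_sub, Nat.mul_one]
      rw [e Km, e b.card]
      exact Nat.mul_le_mul hKb (Nat.sub_le_sub_right hKb 1)
    have := Finset.card_nsmul_le_sum B (fun b => b.card * b.card - b.card)
      (Km * Km - Km) hterm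
    simpa [smul_eq_mul] using this
  have e1 : Km ≤ Km * Km := Nat.le_mul_of_pos_left Km (by omega)
  have e2 : v ≤ v * v := Nat.le_mul_of_pos_left v (by omega)
  have hcR : (n : ℝ) * ((Km : ℝ) * (Km : ℝ) - (Km : ℝ))
      ≤ (v : ℝ) * (v : ℝ) - (v : ℝ) := by
    have h' : ((n * (Km * Km - Km) : ℕ) : ℝ) ≤ ((v * v - v : ℕ) : ℝ) := by
      exact_mod_cast hcount
    rw [Nat.cast_mul, Nat.cast_sub e1, Nat.cast_sub e2] at h'
    push_cast at h' ⊢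
    linarith
  have h3 : (n : ℝ) * ((Km : ℝ) - 1) ^ 2 ≤ (2 * ((v : ℝ) - 1)) ^ 2 := by
    have hn0' : (0:ℝ) ≤ (n:ℝ) := Nat.cast_nonneg n
    have hstep : (n : ℝ) * ((Km : ℝ) - 1) ^ 2 ≤ (n : ℝ) * ((Km : ℝ) * (Km : ℝ) - (Km : ℝ)) := by
      apply mul_le_mul_of_nonneg_left _ hn0'
      nlinarith
    nlinarith [sq_nonneg ((v:ℝ) - 2)]
  have h4 : Real.sqrt n * ((Km : ℝ) - 1) ≤ 2 * ((v : ℝ) - 1) := by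
    have hs := Real.sqrt_le_sqrt h3
    rw [Real.sqrt_mul (Nat.cast_nonneg n), Real.sqrt_sq (by linarith),
      Real.sqrt_sq (by linarith)] at hs
    exact hs
  refine ⟨Φ, ?_⟩
  intro t ht hle
  apply recoverable_of_coherence Φ μ hμ0.le t hnormΦ hcohΦ
  have ht1 : (1 : ℝ) ≤ (t : ℝ) := by exact_mod_cast ht
  have h2t : 2 * (t : ℝ) ≤ Real.sqrt n / (2 * τ) := by
    have := mul_le_mul_of_nonneg_left hle (by norm_num : (0:ℝ) ≤ 2)
    have e : 2 * (Real.sqrt n / (4 * τ)) = Real.sqrt n / (2 * τ) := by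
      field_simp
      ring
    linarith [e ▸ this]
  have hlt : 2 * (t : ℝ) - 1 < Real.sqrt n / (2 * τ) := by linarith
  have hτne : τ ≠ 0 := ne_of_gt hτ0
  have hvne : (v : ℝ) - 1 ≠ 0 := by linarith
  calc (2 * (t : ℝ) - 1) * μ
      < (Real.sqrt n / (2 * τ)) * μ := mul_lt_mul_of_pos_right hlt hμ0
    _ = Real.sqrt n * ((Km : ℝ) - 1) / (2 * ((v : ℝ) - 1)) := by
        rw [hμ]
        field_simp
    _ ≤ 1 := by
        rw [div_le_one (by linarith)]
        linarith [h4]
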